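/- arXiv:1404.2555 — 3 statements merged into one kernel-verified Lean document; each statement's English description precedes it below -/
import Mathlib

section
/- Let f : ℝ → ℝ be continuous and strictly decreasing with f(μ) → L as μ → -∞ (for some L ∈ ℝ) and f(μ) → -∞ as μ → +∞, and let q, r > 0. Then: (i) there exists exactly one μ₁ ∈ (-qr, ∞) with f(μ₁) = qμ₁/(qr + μ₁); (ii) if moreover q < L, there exists exactly one μ₂ ∈ (-∞, -qr) with f(μ₂) = qμ₂/(qr + μ₂), and one has f(μ₁) < q < f(μ₂). -/
open Filter Topology Set

/-- If `f : ℝ → ℝ` is continuous, strictly decreasing, `f(μ) → L` as `μ → -∞` and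
`f(μ) → -∞` as `μ → +∞`, and `q, r > 0`, then (i) there is exactly one `μ₁ ∈ (-qr, ∞)` with
`f(μ₁) = qμ₁/(qr + μ₁)`; (ii) if moreover `q < L`, there is exactly one `μ₂ ∈ (-∞, -qr)`
with `f(μ₂) = qμ₂/(qr + μ₂)`, and `f(μ₁) < q < f(μ₂)`. -/
theorem stmt5 (f : ℝ → ℝ) (hcont : Continuous f) (hanti : StrictAnti f)
    (L : ℝ) (hL : Tendsto f atBot (𝓝 L)) (hbot : Tendsto f atTop atBot)
    (q r : ℝ) (hq : 0 < q) (hr : 0 < r) :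
    (∃! μ₁, μ₁ ∈ Ioi (-(q * r)) ∧ f μ₁ = q * μ₁ / (q * r + μ₁)) ∧
    (q < L →
      (∃! μ₂, μ₂ ∈ Iio (-(q * r)) ∧ f μ₂ = q * μ₂ / (q * r + μ₂)) ∧
      (∀ μ₁ μ₂, μ₁ ∈ Ioi (-(q * r)) → f μ₁ = q * μ₁ / (q * r + μ₁) →
        μ₂ ∈ Iio (-(q * r)) → f μ₂ = q * μ₂ / (q * r + μ₂) →
        f μ₁ < q ∧ q < f μ₂)) := by
  have hc : 0 < q * r := mul_pos hq hr
  set R : ℝ → ℝ := fun μ => q * μ / (q * r + μ) with hR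
  set G : ℝ → ℝ := fun μ => f μ - R μ with hGdef
  -- strict monotonicity of R on each side
  have mono_pos : ∀ x y : ℝ, -(q * r) < x → x < y → R x < R y := by
    intro x y hx hxy
    have hx' : 0 < q * r + x := by linarith
    have hy' : 0 < q * r + y := by linarith
    rw [hR]
    dsimp only
    rw [div_lt_div_iff₀ hx' hy']
    nlinarith [mul_lt_mul_of_pos_left hxy (mul_pos hq hc)]
  have mono_neg : ∀ x y : ℝ, x < y → y < -(q * r) → R x < R y := by
    intro x y hxy hy
    have hy' : q * r + y < 0 := by linarith
    have hx' : q * r + x < 0 := by linarith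
    rw [hR]
    dsimp only
    rw [show q * x / (q * r + x) = -(q * x) / (-(q * r + x)) by rw [neg_div_neg_eq],
      show q * y / (q * r + y) = -(q * y) / (-(q * r + y)) by rw [neg_div_neg_eq],
      div_lt_div_iff₀ (by linarith) (by linarith)]
    nlinarith [mul_lt_mul_of_pos_left hxy (mul_pos hq hc)]
  -- uniqueness helper
  have uniq_pos : ∀ x y : ℝ, -(q * r) < x → -(q * r) < y →
      f x = R x → f y = R y → x = y := by
    intro x y hx hy hfx hfy
    rcases lt_trichotomy x y with h | h | h
    · have h1 := hanti h
      have h2 := mono_pos x y hx h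
      rw [hfx, hfy] at h1; linarith
    · exact h
    · have h1 := hanti h
      have h2 := mono_pos y x hy h
      rw [hfx, hfy] at h1; linarith
  have uniq_neg : ∀ x y : ℝ, x < -(q * r) → y < -(q * r) →
      f x = R x → f y = R y → x = y := by
    intro x y hx hy hfx hfy
    rcases lt_trichotomy x y with h | h | h
    · have h1 := hanti h
      have h2 := mono_neg x y h hy
      rw [hfx, hfy] at h1; linarith
    · exact h
    · have h1 := hanti h
      have h2 := mono_neg y x h hx
      rw [hfx, hfy] at h1; linarith
  -- R < q on the right, q < R on the left
  have R_lt_q : ∀ x : ℝ, -(q * r) < x → R x < q := by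
    intro x hx
    have hx' : 0 < q * r + x := by linarith
    rw [hR]; dsimp only
    rw [div_lt_iff₀ hx']
    nlinarith
  have q_lt_R : ∀ x : ℝ, x < -(q * r) → q < R x := by
    intro x hx
    have hx' : q * r + x < 0 := by linarith
    rw [hR]; dsimp only
    rw [lt_div_iff_of_neg hx']
    nlinarith
  -- existence on (−qr, ∞)
  have ex_pos : ∃ μ, -(q * r) < μ ∧ f μ = R μ := by
    -- G → +∞ as μ → (−qr)⁺
    have hden : Tendsto (fun μ : ℝ => q * r + μ) (𝓝[>] (-(q * r))) (𝓝[>] 0) := by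
      apply tendsto_nhdsWithin_of_tendsto_nhds_of_eventually_within
      · have : Tendsto (fun μ : ℝ => q * r + μ) (𝓝 (-(q * r))) (𝓝 (q * r + -(q * r))) :=
          (continuous_const.add continuous_id).tendsto _
        simpa using this.mono_left nhdsWithin_le_nhds
      · filter_upwards [self_mem_nhdsWithin] with μ hμ
        simp only [mem_Ioi] at hμ ⊢; linarith
    have hinv : Tendsto (fun μ : ℝ => (q * r + μ)⁻¹) (𝓝[>] (-(q * r))) atTop :=
      tendsto_inv_nhdsGT_zero.comp hden
    have hnum : Tendsto (fun μ : ℝ => q * μ) (𝓝[>] (-(q * r))) (𝓝 (q * -(q * r))) :=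
      ((continuous_const.mul continuous_id).tendsto _).mono_left nhdsWithin_le_nhds
    have hRtend : Tendsto R (𝓝[>] (-(q * r))) atBot := by
      have := Filter.Tendsto.neg_mul_atTop (by nlinarith : q * -(q * r) < 0) hnum hinv
      refine this.congr fun μ => ?_
      rw [hR]; simp [div_eq_mul_inv]
    have hGtend : Tendsto G (𝓝[>] (-(q * r))) atTop := by
      have hf : Tendsto f (𝓝[>] (-(q * r))) (𝓝 (f (-(q * r)))) :=
        (hcont.tendsto _).mono_left nhdsWithin_le_nhds
      have : Tendsto (fun μ => -R μ) (𝓝[>] (-(q * r))) atTop :=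
        (tendsto_neg_atBot_atTop).comp hRtend
      exact (hf.add_atTop this).congr fun μ => by rw [hGdef]; ring
    have h1 : ∀ᶠ μ in 𝓝[>] (-(q * r)), 0 < G μ := hGtend.eventually_gt_atTop 0
    have h1' := (h1.and self_mem_nhdsWithin).exists
    obtain ⟨a, ha0, ha⟩ := h1'
    have ha : -(q * r) < a := ha
    -- G → −∞ at +∞
    have hRtop : Tendsto R atTop (𝓝 q) := by
      have hden2 : Tendsto (fun μ : ℝ => q * r + μ) atTop atTop :=
        tendsto_atTop_add_const_left _ _ tendsto_id
      have hinv2 : Tendsto (fun μ : ℝ => (q * r + μ)⁻¹) atTop (𝓝 0) :=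
        tendsto_inv_atTop_zero.comp hden2
      have : Tendsto (fun μ : ℝ => q - q * (q * r) * (q * r + μ)⁻¹) atTop (𝓝 (q - q * (q * r) * 0)) :=
        tendsto_const_nhds.sub (tendsto_const_nhds.mul hinv2)
      rw [mul_zero, sub_zero] at this
      refine this.congr' ?_
      filter_upwards [eventually_gt_atTop (-(q * r))] with μ hμ
      have hμ' : q * r + μ ≠ 0 := by intro h; linarith
      rw [hR]; field_simp
      ring
    have hGbot : Tendsto G atTop atBot := by
      have : Tendsto (fun μ => f μ + -R μ) atTop atBot :=
        Filter.Tendsto.add_atBot hRtop.neg hbot |>.congr fun μ => by ring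
      exact this.congr fun μ => by rw [hGdef]; ring
    have h2 : ∀ᶠ μ in atTop, G μ < 0 ∧ a < μ :=
      (hGbot.eventually_lt_atBot 0).and (eventually_gt_atTop a)
    obtain ⟨b, hb0, hab⟩ := h2.exists
    have hcontG : ContinuousOn G (Icc a b) := by
      apply ContinuousOn.sub hcont.continuousOn
      apply ContinuousOn.div (continuous_const.mul continuous_id).continuousOn
        (continuous_const.add continuous_id).continuousOn
      intro x hx
      have : -(q * r) < x := lt_of_lt_of_le ha hx.1
      simp only [Pi.add_apply, id]
      intro h; nlinarith
    have := intermediate_value_Icc' hab.le hcontG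
    have h0 : (0 : ℝ) ∈ Icc (G b) (G a) := ⟨hb0.le, ha0.le⟩
    obtain ⟨μ, hμmem, hμ0⟩ := this h0
    refine ⟨μ, lt_of_lt_of_le ha hμmem.1, ?_⟩
    have : f μ - R μ = 0 := hμ0
    linarith
  obtain ⟨μ₁, hμ₁mem, hμ₁eq⟩ := ex_pos
  constructor
  · exact ⟨μ₁, ⟨hμ₁mem, hμ₁eq⟩, fun y ⟨hy1, hy2⟩ => uniq_pos y μ₁ hy1 hμ₁mem hy2 hμ₁eq⟩
  · intro hqL
    -- existence on (−∞, −qr)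
    have ex_neg : ∃ μ, μ < -(q * r) ∧ f μ = R μ := by
      -- G → L − q > 0 at −∞
      have hRbot : Tendsto R atBot (𝓝 q) := by
        have hden2 : Tendsto (fun μ : ℝ => q * r + μ) atBot atBot :=
          tendsto_atBot_add_const_left _ _ tendsto_id
        have hinv2 : Tendsto (fun μ : ℝ => (q * r + μ)⁻¹) atBot (𝓝 0) := by
          have h' : Tendsto (fun μ : ℝ => -(q * r + μ)) atBot atTop :=
            tendsto_neg_atBot_atTop.comp hden2
          have h2 := (tendsto_inv_atTop_zero.comp h').neg
          rw [neg_zero] at h2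
          refine h2.congr fun μ => ?_
          simp only [Function.comp_def]
          rw [inv_neg, neg_neg]
        have : Tendsto (fun μ : ℝ => q - q * (q * r) * (q * r + μ)⁻¹) atBot (𝓝 (q - q * (q * r) * 0)) :=
          tendsto_const_nhds.sub (tendsto_const_nhds.mul hinv2)
        rw [mul_zero, sub_zero] at this
        refine this.congr' ?_
        filter_upwards [eventually_lt_atBot (-(q * r))] with μ hμ
        have hμ' : q * r + μ ≠ 0 := by intro h; linarith
        rw [hR]; field_simp
        ring
      have hGL : Tendsto G atBot (𝓝 (L - q)) := hL.sub hRbot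
      have h1 : ∀ᶠ μ in atBot, 0 < G μ :=
        hGL.eventually (eventually_gt_nhds (by linarith))
      -- G → −∞ as μ → (−qr)⁻
      have hden : Tendsto (fun μ : ℝ => -(q * r + μ)) (𝓝[<] (-(q * r))) (𝓝[>] 0) := by
        apply tendsto_nhdsWithin_of_tendsto_nhds_of_eventually_within
        · have : Tendsto (fun μ : ℝ => -(q * r + μ)) (𝓝 (-(q * r))) (𝓝 (-(q * r + -(q * r)))) :=
            ((continuous_const.add continuous_id).neg).tendsto _
          simpa using this.mono_left nhdsWithin_le_nhds
        · filter_upwards [self_mem_nhdsWithin] with μ hμ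
          simp only [mem_Iio] at hμ
          simp only [mem_Ioi]; linarith
      have hinv : Tendsto (fun μ : ℝ => (q * r + μ)⁻¹) (𝓝[<] (-(q * r))) atBot := by
        have h' : Tendsto (fun μ : ℝ => (-(q * r + μ))⁻¹) (𝓝[<] (-(q * r))) atTop :=
          tendsto_inv_nhdsGT_zero.comp hden
        have := tendsto_neg_atTop_atBot.comp h'
        refine this.congr fun μ => ?_
        simp only [Function.comp_def]
        rw [inv_neg, neg_neg]
      have hnum : Tendsto (fun μ : ℝ => q * μ) (𝓝[<] (-(q * r))) (𝓝 (q * -(q * r))) :=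
        ((continuous_const.mul continuous_id).tendsto _).mono_left nhdsWithin_le_nhds
      have hRtend : Tendsto R (𝓝[<] (-(q * r))) atTop := by
        have := Filter.Tendsto.neg_mul_atBot (by nlinarith : q * -(q * r) < 0) hnum hinv
        refine this.congr fun μ => ?_
        rw [hR]; simp [div_eq_mul_inv]
      have hGtend : Tendsto G (𝓝[<] (-(q * r))) atBot := by
        have hf : Tendsto f (𝓝[<] (-(q * r))) (𝓝 (f (-(q * r)))) :=
          (hcont.tendsto _).mono_left nhdsWithin_le_nhds
        have : Tendsto (fun μ => -R μ) (𝓝[<] (-(q * r))) atBot :=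
          tendsto_neg_atTop_atBot.comp hRtend
        exact (hf.add_atBot this).congr fun μ => by rw [hGdef]; ring
      have h2 : ∀ᶠ μ in 𝓝[<] (-(q * r)), G μ < 0 := hGtend.eventually_lt_atBot 0
      obtain ⟨b, hb0, hb⟩ := (h2.and self_mem_nhdsWithin).exists
      have hb : b < -(q * r) := hb
      obtain ⟨a, ha0, hab⟩ := ((h1).and (eventually_lt_atBot b)).exists
      have hcontG : ContinuousOn G (Icc a b) := by
        apply ContinuousOn.sub hcont.continuousOn
        apply ContinuousOn.div (continuous_const.mul continuous_id).continuousOn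
          (continuous_const.add continuous_id).continuousOn
        intro x hx
        have : x < -(q * r) := lt_of_le_of_lt hx.2 hb
        simp only [Pi.add_apply, id]
        intro h; nlinarith
      have := intermediate_value_Icc' hab.le hcontG
      have h0 : (0 : ℝ) ∈ Icc (G b) (G a) := ⟨hb0.le, ha0.le⟩
      obtain ⟨μ, hμmem, hμ0⟩ := this h0
      refine ⟨μ, lt_of_le_of_lt hμmem.2 hb, ?_⟩
      have : f μ - R μ = 0 := hμ0
      linarith
    obtain ⟨μ₂, hμ₂mem, hμ₂eq⟩ := ex_neg
    constructor
    · exact ⟨μ₂, ⟨hμ₂mem, hμ₂eq⟩, fun y ⟨hy1, hy2⟩ => uniq_neg y μ₂ hy1 hμ₂mem hy2 hμ₂eq⟩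
    · intro x y hx hfx hy hfy
      rw [mem_Ioi] at hx; rw [mem_Iio] at hy
      exact ⟨hfx ▸ R_lt_q x hx, hfy ▸ q_lt_R y hy⟩
end

section
/- With the notation of the previous statement, assume the trace inequality: for every τ > 0 there is C_τ > 0 with ‖u‖²_{L²(Γ)} ≤ τ‖∇u‖²_{L²(Ω)} + C_τ‖u‖²_{L²(Ω)} for all u ∈ H¹₀(Ω). Then for each k, μ ↦ λ_k(μ) is locally Lipschitz continuous; more precisely, for any μ₀ ≤ μ ≤ μ̃ ≤ μ₁ and τ > 0 with τμ₁ ≤ 1/2, one has 0 ≤ λ_k(μ) - λ_k(μ̃) ≤ 2(τ λ_k(μ₀) + C_τ)(μ̃ - μ). -/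
open Module

private lemma real_iSup_pair {ι : Type*} (s t : ι → ℝ) (al be : ℝ) (hal : 0 < al)
    (hbe : 0 ≤ be) (hst : ∀ i, s i ≤ t i) (hts : ∀ i, t i ≤ al * s i + be) :
    (⨆ i, s i) ≤ (⨆ i, t i) ∧ (⨆ i, t i) ≤ al * (⨆ i, s i) + be := by
  cases isEmpty_or_nonempty ι with
  | inl h =>
    rw [Real.iSup_of_isEmpty, Real.iSup_of_isEmpty]
    constructor <;> nlinarith
  | inr h =>
    by_cases hbt : BddAbove (Set.range t)
    · have hbs : BddAbove (Set.range s) := by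
        obtain ⟨M, hM⟩ := hbt
        exact ⟨M, Set.forall_mem_range.2 fun i =>
          (hst i).trans (hM (Set.mem_range_self i))⟩
      constructor
      · exact ciSup_le fun i => (hst i).trans (le_ciSup hbt i)
      · refine ciSup_le fun i => (hts i).trans ?_
        have := le_ciSup hbs i
        nlinarith
    · have hbs : ¬ BddAbove (Set.range s) := by
        intro hbs
        obtain ⟨M, hM⟩ := hbs
        refine hbt ⟨al * M + be, Set.forall_mem_range.2 fun i => ?_⟩
        have hM' := hM (Set.mem_range_self i)
        have := hts i
        nlinarith
      rw [Real.iSup_of_not_bddAbove hbt, Real.iSup_of_not_bddAbove hbs]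
      constructor <;> nlinarith

private lemma real_iSup_lb {ι : Type*} (t : ι → ℝ) (m : ℝ) (hm : m ≤ 0)
    (h : ∀ i, m ≤ t i) : m ≤ ⨆ i, t i := by
  cases isEmpty_or_nonempty ι with
  | inl hι => rw [Real.iSup_of_isEmpty]; exact hm
  | inr hι =>
    by_cases hbt : BddAbove (Set.range t)
    · exact (h (Classical.arbitrary ι)).trans (le_ciSup hbt _)
    · rw [Real.iSup_of_not_bddAbove hbt]; exact hm

private lemma real_iInf_triple {ι : Type*} (s t : ι → ℝ) (m al be : ℝ) (hm : m ≤ 0)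
    (hms : ∀ i, m ≤ s i) (hal : 0 < al) (hbe : 0 ≤ be)
    (hst : ∀ i, s i ≤ t i) (hts : ∀ i, t i ≤ al * s i + be) :
    m ≤ (⨅ i, s i) ∧ (⨅ i, s i) ≤ (⨅ i, t i) ∧ (⨅ i, t i) ≤ al * (⨅ i, s i) + be := by
  cases isEmpty_or_nonempty ι with
  | inl h =>
    rw [Real.iInf_of_isEmpty, Real.iInf_of_isEmpty]
    refine ⟨hm, le_refl _, by nlinarith⟩
  | inr h =>
    have hbs : BddBelow (Set.range s) := ⟨m, Set.forall_mem_range.2 hms⟩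
    have hbt : BddBelow (Set.range t) :=
      ⟨m, Set.forall_mem_range.2 fun i => (hms i).trans (hst i)⟩
    refine ⟨le_ciInf hms, le_ciInf fun i => (ciInf_le hbs i).trans (hst i), ?_⟩
    have h1 : ∀ i, (⨅ j, t j) ≤ al * s i + be := fun i => (ciInf_le hbt i).trans (hts i)
    have h2 : ((⨅ j, t j) - be) / al ≤ ⨅ i, s i := by
      refine le_ciInf fun i => ?_
      rw [div_le_iff₀ hal]
      linarith [h1 i]
    rw [div_le_iff₀ hal] at h2
    linarith

set_option maxHeartbeats 1000000

/-- Local Lipschitz continuity of the min-max eigenvalue curves `μ ↦ λ_k(μ)` of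
`η^μ[u] = a[u] - μ b[u]` relative to `c[u]` on `V = H¹₀(Ω)`, under the trace inequality
`b[u] ≤ τ a[u] + C_τ c[u]`: for `μ₀ ≤ μ ≤ μ̃ ≤ μ₁` and `τ > 0` with `τ μ₁ ≤ 1/2`,
`0 ≤ λ_k(μ) - λ_k(μ̃) ≤ 2(τ λ_k(μ₀) + C_τ)(μ̃ - μ)`. -/
theorem stmt9 {V : Type*} [AddCommGroup V] [Module ℝ V]
    (a b c : QuadraticForm ℝ V)
    (hb : ∀ u, 0 ≤ b u) (hc : ∀ u, u ≠ 0 → 0 < c u)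
    (k : ℕ) (lam : ℝ → ℝ)
    (hlam : ∀ μ, lam μ =
      ⨅ L : {L : Submodule ℝ V // finrank ℝ L = k},
        ⨆ u : {u : V // u ∈ L.1 ∧ u ≠ 0}, (a u.1 - μ * b u.1) / c u.1)
    (τ Cτ : ℝ) (hτ : 0 < τ) (hCτ : 0 < Cτ)
    (htrace : ∀ u, b u ≤ τ * a u + Cτ * c u)
    (μ₀ μ μt μ₁ : ℝ) (h₀ : μ₀ ≤ μ) (hμ : μ ≤ μt) (h₁ : μt ≤ μ₁)
    (hτμ₁ : τ * μ₁ ≤ 1 / 2) :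
    0 ≤ lam μ - lam μt ∧ lam μ - lam μt ≤ 2 * (τ * lam μ₀ + Cτ) * (μt - μ) := by
  -- Rayleigh quotient
  set R : ℝ → V → ℝ := fun ν u => (a u - ν * b u) / c u with hR
  -- per-subspace sup
  set f : ℝ → {L : Submodule ℝ V // finrank ℝ L = k} → ℝ :=
    fun ν L => ⨆ u : {u : V // u ∈ L.1 ∧ u ≠ 0}, R ν u.1 with hf
  have hlam' : ∀ ν, lam ν = ⨅ L, f ν L := hlam
  -- denominators
  have hden : ∀ ν, ν ≤ μ₁ → (1:ℝ)/2 ≤ 1 - τ * ν := by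
    intro ν hν
    have : τ * ν ≤ τ * μ₁ := mul_le_mul_of_nonneg_left hν hτ.le
    linarith
  -- pointwise estimates, for μ' ≤ ν ≤ μ₁
  have key : ∀ μ' ν : ℝ, μ' ≤ ν → ν ≤ μ₁ → ∀ u : V, u ≠ 0 →
      (R ν u ≤ R μ' u ∧
       R μ' u ≤ (1 + τ * ((ν - μ')/(1 - τ*ν))) * R ν u + Cτ * ((ν - μ')/(1 - τ*ν)) ∧
       -(Cτ/τ) ≤ R ν u) := by
    intro μ' ν hμν hνμ₁ u hu
    have hC : 0 < c u := hc u hu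
    have hB : 0 ≤ b u := hb u
    have htr : b u ≤ τ * a u + Cτ * c u := htrace u
    have hD : (1:ℝ)/2 ≤ 1 - τ * ν := hden ν hνμ₁
    have hD' : (0:ℝ) < 1 - τ * ν := by linarith
    set A := a u; set B := b u; set C := c u
    set P : ℝ := (ν - μ')/(1 - τ*ν) with hPdef
    have hPnn : 0 ≤ P := div_nonneg (by linarith) hD'.le
    have hPeq : P * (1 - τ*ν) = ν - μ' := div_mul_cancel₀ _ hD'.ne'
    -- b bound: B * (1 - τν) ≤ τ (A - νB) + Cτ C
    have hBb : B * (1 - τ*ν) ≤ τ * (A - ν*B) + Cτ * C := by nlinarith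
    refine ⟨?_, ?_, ?_⟩
    · -- monotone
      exact (div_le_div_iff_of_pos_right hC).mpr (by nlinarith)
    · -- key affine bound
      have hrw : (1 + τ * P) * ((A - ν*B)/C) + Cτ * P
          = ((1 + τ * P) * (A - ν*B) + Cτ * P * C) / C := by
        field_simp; try ring
      show (A - μ'*B)/C ≤ (1 + τ * P) * ((A - ν*B)/C) + Cτ * P
      rw [hrw]
      refine (div_le_div_iff_of_pos_right hC).mpr ?_
      have h3 : (ν - μ') * B ≤ P * (τ * (A - ν*B) + Cτ * C) := by
        have := mul_le_mul_of_nonneg_left hBb hPnn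
        nlinarith
      nlinarith
    · -- uniform lower bound
      have h0 : 0 ≤ τ * (A - ν*B) + Cτ * C := by nlinarith
      have hrw : R ν u = (A - ν*B)/C := rfl
      have hQ : τ * (Cτ/τ) = Cτ := mul_div_cancel₀ _ hτ.ne'
      rw [hrw, le_div_iff₀ hC]
      nlinarith [h0, hQ, mul_pos hτ hC]
  -- lift to the subspace level and then to lam, for a pair μ' ≤ ν ≤ μ₁ with μ₀ ≤ μ'
  have main : ∀ μ' ν : ℝ, μ' ≤ ν → ν ≤ μ₁ →
      (-(Cτ/τ) ≤ lam ν ∧ lam ν ≤ lam μ' ∧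
        lam μ' ≤ (1 + τ * ((ν - μ')/(1 - τ*ν))) * lam ν + Cτ * ((ν - μ')/(1 - τ*ν))) := by
    intro μ' ν hμν hνμ₁
    have hD' : (0:ℝ) < 1 - τ * ν := by linarith [hden ν hνμ₁]
    set P : ℝ := (ν - μ')/(1 - τ*ν) with hPdef
    have hPnn : 0 ≤ P := div_nonneg (by linarith) hD'.le
    have hal : 0 < 1 + τ * P := by nlinarith
    have hbe : 0 ≤ Cτ * P := mul_nonneg hCτ.le hPnn
    have hm : -(Cτ/τ) ≤ 0 := neg_nonpos.mpr (by positivity)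
    -- per subspace
    have hsup : ∀ L : {L : Submodule ℝ V // finrank ℝ L = k},
        (-(Cτ/τ) ≤ f ν L ∧ f ν L ≤ f μ' L ∧
          f μ' L ≤ (1 + τ * P) * f ν L + Cτ * P) := by
      intro L
      have h1 := real_iSup_pair (fun u : {u : V // u ∈ L.1 ∧ u ≠ 0} => R ν u.1)
        (fun u => R μ' u.1) (1 + τ * P) (Cτ * P) hal hbe
        (fun u => (key μ' ν hμν hνμ₁ u.1 u.2.2).1)
        (fun u => (key μ' ν hμν hνμ₁ u.1 u.2.2).2.1)
      have h2 := real_iSup_lb (fun u : {u : V // u ∈ L.1 ∧ u ≠ 0} => R ν u.1)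
        (-(Cτ/τ)) hm (fun u => (key μ' ν hμν hνμ₁ u.1 u.2.2).2.2)
      exact ⟨h2, h1.1, h1.2⟩
    have h3 := real_iInf_triple (fun L => f ν L) (fun L => f μ' L) (-(Cτ/τ))
      (1 + τ * P) (Cτ * P) hm (fun L => (hsup L).1) hal hbe
      (fun L => (hsup L).2.1) (fun L => (hsup L).2.2)
    rw [hlam' ν, hlam' μ']
    exact ⟨h3.1, h3.2.1, h3.2.2⟩
  -- assemble
  obtain ⟨hlow, hmono1, hkey⟩ := main μ μt hμ h₁
  obtain ⟨_, hmono0, _⟩ := main μ₀ μ h₀ (le_trans hμ h₁)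
  set P : ℝ := (μt - μ)/(1 - τ*μt) with hPdef
  have hD : (1:ℝ)/2 ≤ 1 - τ * μt := hden μt h₁
  have hD' : (0:ℝ) < 1 - τ * μt := by linarith
  have hPeq : P * (1 - τ*μt) = μt - μ := div_mul_cancel₀ _ hD'.ne'
  have hPnn : 0 ≤ P := div_nonneg (by linarith) hD'.le
  have hP2 : P ≤ 2 * (μt - μ) := by nlinarith
  have hpos : 0 ≤ τ * lam μt + Cτ := by
    have : τ * (-(Cτ/τ)) ≤ τ * lam μt := mul_le_mul_of_nonneg_left hlow hτ.le
    have hτC : τ * (Cτ/τ) = Cτ := mul_div_cancel₀ _ hτ.ne'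
    nlinarith
  have hmm : lam μt ≤ lam μ₀ := le_trans hmono1 hmono0
  constructor
  · linarith
  · -- lam μ - lam μt ≤ P * (τ * lam μt + Cτ) ≤ 2 (μt-μ)(τ lam μ₀ + Cτ)
    have h4 : lam μ - lam μt ≤ P * (τ * lam μt + Cτ) := by nlinarith
    have h5 : P * (τ * lam μt + Cτ) ≤ 2 * (μt - μ) * (τ * lam μt + Cτ) :=
      mul_le_mul_of_nonneg_right hP2 hpos
    have h6 : 2 * (μt - μ) * (τ * lam μt + Cτ) ≤ 2 * (μt - μ) * (τ * lam μ₀ + Cτ) := by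
      have : τ * lam μt ≤ τ * lam μ₀ := mul_le_mul_of_nonneg_left hmm hτ.le
      nlinarith
    nlinarith
end

section
/- Let q ∈ (0,∞), r > 0, λ ≠ q, and let (u₁, u₂) ∈ H¹₀(Ω) ⊕ L²(Γ) satisfy, for all (v₁, v₂) ∈ H¹₀(Ω) ⊕ L²(Γ): ∫_Ω ∇u₁·∇v̄₁ dx + qr ∫_Γ (u₁ - u₂)(v̄₁ - v̄₂) ds = λ(∫_Ω u₁ v̄₁ dx + r ∫_Γ u₂ v̄₂ ds). Then u₂ = q u₁|_Γ/(q - λ), and u₁ satisfies ∫_Ω ∇u₁·∇v̄₁ dx - (λqr/(q-λ)) ∫_Γ u₁ v̄₁ ds = λ ∫_Ω u₁ v̄₁ dx for all v₁ ∈ H¹₀(Ω). Conversely, if u₂ = q u₁|_Γ/(q - λ) and the second identity holds, then the first identity holds. -/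
open scoped InnerProductSpace

/-- Reduction of the eigenvalue equation for the limit operator `A_{q,r}` to a `λ`-nonlinear
problem for `u₁` alone: for `q > 0`, `r > 0`, `λ ≠ q`, a pair `(u₁, u₂) ∈ H¹₀(Ω) ⊕ L²(Γ)`
satisfies the weak eigenvalue identity iff `u₂ = q u₁|_Γ/(q-λ)` and `u₁` satisfies
`∫_Ω ∇u₁·∇v₁ - (λqr/(q-λ)) ∫_Γ u₁ v₁ = λ ∫_Ω u₁ v₁` for all `v₁ ∈ H¹₀(Ω)`. Abstractly,
`V₀ = H¹₀(Ω)` embeds by `ι` into `H₁ = L²(Ω)`, `G` is the gradient (into `W`), `T` the trace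
into `H₂ = L²(Γ)`. -/
theorem stmt13 {V₀ W H₁ H₂ : Type*}
    [NormedAddCommGroup V₀] [InnerProductSpace ℝ V₀]
    [NormedAddCommGroup W] [InnerProductSpace ℝ W]
    [NormedAddCommGroup H₁] [InnerProductSpace ℝ H₁]
    [NormedAddCommGroup H₂] [InnerProductSpace ℝ H₂]
    (ι : V₀ →L[ℝ] H₁) (G : V₀ →L[ℝ] W) (T : V₀ →L[ℝ] H₂)
    (q r lam : ℝ) (hq : 0 < q) (hr : 0 < r) (hlam : lam ≠ q)
    (u₁ : V₀) (u₂ : H₂) :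
    (∀ (v₁ : V₀) (v₂ : H₂),
        ⟪G u₁, G v₁⟫_ℝ + q * r * ⟪T u₁ - u₂, T v₁ - v₂⟫_ℝ
          = lam * (⟪ι u₁, ι v₁⟫_ℝ + r * ⟪u₂, v₂⟫_ℝ)) ↔
      (u₂ = (q / (q - lam)) • T u₁ ∧
        ∀ v₁ : V₀,
          ⟪G u₁, G v₁⟫_ℝ - (lam * q * r / (q - lam)) * ⟪T u₁, T v₁⟫_ℝ
            = lam * ⟪ι u₁, ι v₁⟫_ℝ) := by
  have hql : q - lam ≠ 0 := sub_ne_zero.mpr (Ne.symm hlam)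
  constructor
  · intro h
    have hu₂ : u₂ = (q / (q - lam)) • T u₁ := by
      set a : H₂ := q • u₂ - q • T u₁ - lam • u₂ with ha
      have key : ∀ v₂ : H₂, ⟪a, v₂⟫_ℝ = 0 := by
        intro v₂
        have h0 := h 0 v₂
        simp only [map_zero, inner_zero_right, sub_zero, zero_sub, inner_neg_right,
          inner_sub_left] at h0
        have hr' : r ≠ 0 := ne_of_gt hr
        have : ⟪a, v₂⟫_ℝ * r = 0 := by
          simp only [ha, inner_sub_left, inner_smul_left, RCLike.inner_apply, conj_trivial]
          nlinarith [h0]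
        exact (mul_eq_zero.mp this).resolve_right hr'
      have ha0 : a = 0 := inner_self_eq_zero.mp (key a)
      have : (q - lam) • u₂ = q • T u₁ := by
        linear_combination (norm := module) ha0
      have := congrArg (fun x => (q - lam)⁻¹ • x) this
      simpa [smul_smul, inv_mul_cancel₀ hql, div_eq_inv_mul] using this
    refine ⟨hu₂, fun v₁ => ?_⟩
    have h1 := h v₁ 0
    simp only [inner_zero_right, sub_zero, mul_zero, add_zero] at h1
    rw [hu₂] at h1
    rw [show T u₁ - (q / (q - lam)) • T u₁ = ((1 : ℝ) - q / (q - lam)) • T u₁ by module,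
      inner_smul_left] at h1
    simp only [RCLike.inner_apply, conj_trivial] at h1
    field_simp at h1 ⊢
    linarith [h1]
  · rintro ⟨hu₂, hv⟩ v₁ v₂
    have h1 := hv v₁
    rw [hu₂]
    rw [show T u₁ - (q / (q - lam)) • T u₁ = ((1 : ℝ) - q / (q - lam)) • T u₁ by module]
    simp only [inner_smul_left, inner_sub_right, RCLike.inner_apply, conj_trivial]
    field_simp at h1 ⊢
    nlinarith [h1]
end
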